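/- Core membership of the fixed-point payoffs: let x be a fixed point of the tree bargaining equations and define u_t = (1 − x_t)·w_t for every node t (so u_r = w_r). Then the total payoff equals the grand coalition value, ∑_{t ∈ T} u_t = v* = V(T), and for every coalition S of nodes, ∑_{t ∈ S} u_t ≥ V(S); in other words, the payoff vector u belongs to the core of the cooperative game (T, V). -/

import Mathlib

/-- A finite rooted tree, given by a parent function: the root is its own
parent, and every node reaches the root by iterating `parent`. -/
structure BTree where
  V : Type
  [instFintype : Fintype V]
  [instDecEq : DecidableEq V]
  root : V
  parent : V → V
  parent_root : parent root = root
  reaches_root : ∀ t : V, ∃ k : ℕ, parent^[k] t = root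

attribute [instance] BTree.instFintype BTree.instDecEq

/-- The children of a node `s`: the non-root nodes whose parent is `s`. -/
def BTree.children (T : BTree) (s : T.V) : Finset T.V :=
  Finset.univ.filter fun t => t ≠ T.root ∧ T.parent t = s

/-- A leaf is a node with no children. -/
def BTree.IsLeaf (T : BTree) (l : T.V) : Prop :=
  T.children l = ∅

/-- Maximum of `f` over a finite set `F`, with value `0` when `F` is empty. -/
noncomputable def fmax {α : Type*} (F : Finset α) (f : α → ℝ) : ℝ :=
  sSup (insert 0 (f '' (F : Set α)))

/-- `w` is the value function determined by leaf values `v` and shares `x`: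
`w l = v l` at each leaf `l`, and `w s = max_{t ∈ children s} x t · w t` at
each internal node `s`. -/
def IsValueFn (T : BTree) (v x w : T.V → ℝ) : Prop :=
  (∀ l, T.IsLeaf l → w l = v l) ∧
  ∀ s, ¬ T.IsLeaf s → w s = fmax (T.children s) fun t => x t * w t

/-- `wexcl T x w s t`: the maximum value reaching `s` from its children other
than `t` (`0` when `t` is the only child). -/
noncomputable def wexcl (T : BTree) (x w : T.V → ℝ) (s t : T.V) : ℝ :=
  fmax ((T.children s).erase t) fun t' => x t' * w t'

/-- A fixed point of the tree bargaining equations: `x` is a share vector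
(`x root = 0`, `x t ∈ [0,1]` off the root), `w` is the induced value function,
and for every non-root `t` with parent `s`:
`(1 − x t)·w t = (1 − x s)·(max(w_{s∖t}, x t · w t) − w_{s∖t})`. -/
def IsTreeFixedPoint (T : BTree) (v x w : T.V → ℝ) : Prop :=
  IsValueFn T v x w ∧
  x T.root = 0 ∧
  (∀ t, t ≠ T.root → 0 ≤ x t ∧ x t ≤ 1) ∧
  ∀ t, t ≠ T.root →
    (1 - x t) * w t =
      (1 - x (T.parent t)) *
        (max (wexcl T x w (T.parent t) t) (x t * w t) - wexcl T x w (T.parent t) t)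

lemma fmax_eq_max' {α : Type*} (F : Finset α) (f : α → ℝ) :
    fmax F f = (insert 0 (F.image f)).max' (Finset.insert_nonempty _ _) := by
  rw [← Finset.Nonempty.csSup_eq_max']
  unfold fmax
  congr 1
  simp

lemma fmax_nonneg {α : Type*} (F : Finset α) (f : α → ℝ) : 0 ≤ fmax F f := by
  rw [fmax_eq_max']
  exact Finset.le_max' _ _ (Finset.mem_insert_self _ _)

lemma le_fmax {α : Type*} {F : Finset α} (f : α → ℝ) {t : α} (ht : t ∈ F) :
    f t ≤ fmax F f := by
  rw [fmax_eq_max']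
  exact Finset.le_max' _ _ (Finset.mem_insert_of_mem (Finset.mem_image_of_mem f ht))

lemma fmax_le {α : Type*} {F : Finset α} {f : α → ℝ} {b : ℝ} (hb : 0 ≤ b)
    (h : ∀ t ∈ F, f t ≤ b) : fmax F f ≤ b := by
  rw [fmax_eq_max']
  apply Finset.max'_le
  intro y hy
  rcases Finset.mem_insert.1 hy with rfl | hy
  · exact hb
  · rcases Finset.mem_image.1 hy with ⟨t, ht, rfl⟩
    exact h t ht

lemma fmax_congr {α : Type*} {F : Finset α} {f g : α → ℝ}
    (h : ∀ t ∈ F, f t = g t) : fmax F f = fmax F g := by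
  unfold fmax
  congr 1
  ext y
  simp only [Set.mem_insert_iff, Set.mem_image, Finset.mem_coe]
  constructor
  · rintro (rfl | ⟨t, ht, rfl⟩)
    · exact Or.inl rfl
    · exact Or.inr ⟨t, ht, (h t ht).symm⟩
  · rintro (rfl | ⟨t, ht, rfl⟩)
    · exact Or.inl rfl
    · exact Or.inr ⟨t, ht, h t ht⟩

lemma fmax_erase {α : Type*} [DecidableEq α] {F : Finset α} (f : α → ℝ) {t : α}
    (ht : t ∈ F) : fmax F f = max (f t) (fmax (F.erase t) f) := by
  apply le_antisymm
  · apply fmax_le (le_trans (fmax_nonneg _ f) (le_max_right _ _))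
    intro t' ht'
    rcases eq_or_ne t' t with rfl | hne
    · exact le_max_left _ _
    · exact le_trans (le_fmax f (Finset.mem_erase.2 ⟨hne, ht'⟩)) (le_max_right _ _)
  · apply max_le (le_fmax f ht)
    exact fmax_le (fmax_nonneg _ _) fun t' ht' => le_fmax f (Finset.mem_erase.1 ht').2

lemma fmax_attach {α : Type*} (F : Finset α) (f : α → ℝ) :
    fmax F.attach (fun c => f c.1) = fmax F f := by
  unfold fmax
  congr 1
  ext y
  simp only [Set.mem_insert_iff, Set.mem_image, Finset.mem_coe, Finset.mem_attach]
  constructor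
  · rintro (rfl | ⟨c, _, rfl⟩)
    · exact Or.inl rfl
    · exact Or.inr ⟨c.1, c.2, rfl⟩
  · rintro (rfl | ⟨a, ha, rfl⟩)
    · exact Or.inl rfl
    · exact Or.inr ⟨⟨a, ha⟩, trivial, rfl⟩


namespace BTree

variable (T : BTree)

lemma mem_children {t s : T.V} : t ∈ T.children s ↔ t ≠ T.root ∧ T.parent t = s := by
  simp [children]

lemma mem_children_parent {t : T.V} (h : t ≠ T.root) : t ∈ T.children (T.parent t) :=
  (T.mem_children).2 ⟨h, rfl⟩

lemma not_isLeaf_of_mem_children {t s : T.V} (h : t ∈ T.children s) : ¬ T.IsLeaf s := by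
  intro hl
  rw [IsLeaf] at hl
  rw [hl] at h
  exact absurd h (Finset.notMem_empty t)

lemma iterate_parent_root : ∀ k, T.parent^[k] T.root = T.root := by
  intro k
  induction k with
  | zero => rfl
  | succ n ih => rw [Function.iterate_succ_apply, T.parent_root, ih]

noncomputable def depth (t : T.V) : ℕ := Nat.find (T.reaches_root t)

lemma depth_spec (t : T.V) : T.parent^[T.depth t] t = T.root := Nat.find_spec (T.reaches_root t)

lemma depth_min {t : T.V} {k : ℕ} (h : k < T.depth t) : T.parent^[k] t ≠ T.root :=
  Nat.find_min _ h

lemma depth_eq_zero_iff {t : T.V} : T.depth t = 0 ↔ t = T.root := by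
  constructor
  · intro h
    have := T.depth_spec t
    rwa [h] at this
  · rintro rfl
    exact Nat.le_zero.1 (Nat.find_le (by simp))

lemma eq_root_of_iterate {t : T.V} {j : ℕ} (hj : 1 ≤ j) (h : T.parent^[j] t = t) :
    t = T.root := by
  have hmul : ∀ m : ℕ, T.parent^[m * j] t = t := by
    intro m
    induction m with
    | zero => simp
    | succ n ih => rw [Nat.succ_mul, Function.iterate_add_apply, h, ih]
  have hd : T.depth t ≤ T.depth t * j := Nat.le_mul_of_pos_right _ hj
  calc t = T.parent^[T.depth t * j] t := (hmul _).symm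
    _ = T.parent^[T.depth t * j - T.depth t] (T.parent^[T.depth t] t) := by
        rw [← Function.iterate_add_apply]
        congr 1
        omega
    _ = T.root := by rw [T.depth_spec, T.iterate_parent_root]

lemma depth_parent_add_one {t : T.V} (h : t ≠ T.root) :
    T.depth t = T.depth (T.parent t) + 1 := by
  have h1 : 1 ≤ T.depth t := by
    rcases Nat.eq_zero_or_pos (T.depth t) with h0 | h0
    · exact absurd (T.depth_eq_zero_iff.1 h0) h
    · exact h0
  apply le_antisymm
  · have : T.parent^[T.depth (T.parent t) + 1] t = T.root := by
      rw [Function.iterate_succ_apply, T.depth_spec]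
    exact Nat.find_le this
  · have h3 : T.depth t - 1 + 1 = T.depth t := by omega
    have hsp := T.depth_spec t
    rw [← h3, Function.iterate_succ_apply] at hsp
    have h2 : T.depth (T.parent t) ≤ T.depth t - 1 := Nat.find_le hsp
    omega

lemma depth_child {t s : T.V} (h : t ∈ T.children s) :
    T.depth t = T.depth s + 1 := by
  obtain ⟨hne, hp⟩ := T.mem_children.1 h
  rw [T.depth_parent_add_one hne, hp]

lemma depth_lt_card (t : T.V) : T.depth t < Fintype.card T.V := by
  have key : ∀ i j, i < j → j ≤ T.depth t → T.parent^[i] t ≠ T.parent^[j] t := by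
    intro i j hlt hj hij
    have hroot : T.parent^[T.depth t - j + i] t = T.root := by
      calc T.parent^[T.depth t - j + i] t = T.parent^[T.depth t - j] (T.parent^[i] t) := by
            rw [← Function.iterate_add_apply]
        _ = T.parent^[T.depth t - j] (T.parent^[j] t) := by rw [hij]
        _ = T.parent^[T.depth t - j + j] t := by rw [← Function.iterate_add_apply]
        _ = T.root := by
            have hdj : T.depth t - j + j = T.depth t := by omega
            rw [hdj]; exact T.depth_spec t
    exact T.depth_min (by omega) hroot
  have hinj : Set.InjOn (fun k => T.parent^[k] t) (Finset.range (T.depth t + 1)) := by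
    intro i hi j hj hij
    simp only [Finset.coe_range, Set.mem_Iio] at hi hj
    change T.parent^[i] t = T.parent^[j] t at hij
    rcases lt_trichotomy i j with h | h | h
    · exact absurd hij (key i j h (by omega))
    · exact h
    · exact absurd hij.symm (key j i h (by omega))
  have := Finset.card_le_card_of_injOn (fun k => T.parent^[k] t)
    (fun k _ => Finset.mem_univ _) hinj
  simpa using this

lemma height_induction (P : T.V → Prop)
    (h : ∀ s, (∀ t ∈ T.children s, P t) → P s) : ∀ s, P s := by
  have key : ∀ n s, Fintype.card T.V - T.depth s ≤ n → P s := by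
    intro n
    induction n with
    | zero =>
      intro s hs
      have := T.depth_lt_card s
      omega
    | succ n ih =>
      intro s hs
      apply h
      intro t ht
      apply ih
      have h1 := T.depth_child ht
      have h2 := T.depth_lt_card s
      omega
  exact fun s => key (Fintype.card T.V) s (by omega)

lemma depth_strong_induction (P : T.V → Prop)
    (hroot : P T.root)
    (h : ∀ t, t ≠ T.root → P (T.parent t) → P t) : ∀ t, P t := by
  have key : ∀ n t, T.depth t ≤ n → P t := by
    intro n
    induction n with
    | zero =>
      intro t ht
      have := T.depth_eq_zero_iff.1 (Nat.le_zero.1 ht)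
      rwa [this]
    | succ n ih =>
      intro t ht
      rcases eq_or_ne t T.root with rfl | hne
      · exact hroot
      · refine h t hne (ih _ ?_)
        have := T.depth_parent_add_one hne
        omega
  exact fun t => key (T.depth t) t le_rfl

end BTree


instance BTree.decIsLeaf (T : BTree) (t : T.V) : Decidable (T.IsLeaf t) := by
  unfold BTree.IsLeaf; infer_instance

/-- The maximal leaf value in the subtree rooted at `t`, defined recursively. -/
noncomputable def Mfun (T : BTree) (v : T.V → ℝ) (t : T.V) : ℝ :=
  if T.IsLeaf t then v t
  else fmax (T.children t).attach (fun c => Mfun T v c.1)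
termination_by Fintype.card T.V - T.depth t
decreasing_by
  have h1 := T.depth_child c.2
  have h2 := T.depth_lt_card t
  omega

lemma Mfun_leaf {T : BTree} (v : T.V → ℝ) {t : T.V} (h : T.IsLeaf t) :
    Mfun T v t = v t := by rw [Mfun, if_pos h]

lemma Mfun_internal {T : BTree} (v : T.V → ℝ) {t : T.V} (h : ¬ T.IsLeaf t) :
    Mfun T v t = fmax (T.children t) (Mfun T v) := by
  rw [Mfun, if_neg h, fmax_attach]



section FixedPointLemmas

variable {T : BTree} {v x w : T.V → ℝ}

lemma fp_x_nonneg (hfp : IsTreeFixedPoint T v x w) (t : T.V) : 0 ≤ x t := by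
  rcases eq_or_ne t T.root with rfl | h
  · rw [hfp.2.1]
  · exact (hfp.2.2.1 t h).1

lemma fp_x_le_one (hfp : IsTreeFixedPoint T v x w) (t : T.V) : x t ≤ 1 := by
  rcases eq_or_ne t T.root with rfl | h
  · rw [hfp.2.1]; norm_num
  · exact (hfp.2.2.1 t h).2

lemma fp_w_pos (hfp : IsTreeFixedPoint T v x w) (hv : ∀ l, T.IsLeaf l → 0 < v l) :
    ∀ t, 0 < w t := by
  apply T.height_induction
  intro s IH
  by_cases hs : T.IsLeaf s
  · rw [hfp.1.1 s hs]; exact hv s hs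
  · obtain ⟨c, hc⟩ := Finset.nonempty_iff_ne_empty.2 hs
    by_contra hws
    have hw0 : w s = 0 := by
      have h1 : 0 ≤ w s := by rw [hfp.1.2 s hs]; exact fmax_nonneg _ _
      have h2 : ¬ 0 < w s := hws
      linarith
    have hall : ∀ c' ∈ T.children s, x c' * w c' = 0 := by
      intro c' hc'
      have h1 : x c' * w c' ≤ w s := by
        rw [hfp.1.2 s hs]; exact le_fmax (fun t => x t * w t) hc'
      have h2 : 0 ≤ x c' * w c' :=
        mul_nonneg (fp_x_nonneg hfp c') (IH c' hc').le
      linarith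
    have hwex : wexcl T x w s c = 0 := by
      apply le_antisymm
      · exact fmax_le le_rfl fun t' ht' => le_of_eq (hall t' (Finset.mem_erase.1 ht').2)
      · exact fmax_nonneg _ _
    obtain ⟨hcne, hcp⟩ := T.mem_children.1 hc
    have heq := hfp.2.2.2 c hcne
    rw [hcp, hwex, hall c hc] at heq
    simp at heq
    have := IH c hc
    have := hall c hc
    rcases heq with h | h
    · nlinarith
    · linarith

lemma fp_u_nonneg (hfp : IsTreeFixedPoint T v x w) (hv : ∀ l, T.IsLeaf l → 0 < v l)
    (t : T.V) : 0 ≤ (1 - x t) * w t :=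
  mul_nonneg (by have := fp_x_le_one hfp t; linarith) (fp_w_pos hfp hv t).le

lemma fp_w_parent (hfp : IsTreeFixedPoint T v x w) {t : T.V} (h : t ≠ T.root) :
    w (T.parent t) = max (wexcl T x w (T.parent t) t) (x t * w t) := by
  have hc : t ∈ T.children (T.parent t) := T.mem_children_parent h
  have hs : ¬ T.IsLeaf (T.parent t) := T.not_isLeaf_of_mem_children hc
  rw [hfp.1.2 _ hs, fmax_erase _ hc, max_comm]
  rfl

lemma fp_w_le_M (hfp : IsTreeFixedPoint T v x w) (hv : ∀ l, T.IsLeaf l → 0 < v l) :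
    ∀ t, w t ≤ Mfun T v t := by
  apply T.height_induction
  intro s IH
  by_cases hs : T.IsLeaf s
  · rw [hfp.1.1 s hs, Mfun_leaf v hs]
  · rw [hfp.1.2 s hs, Mfun_internal v hs]
    apply fmax_le (fmax_nonneg _ _)
    intro t ht
    calc x t * w t ≤ w t :=
          mul_le_of_le_one_left (fp_w_pos hfp hv t).le (fp_x_le_one hfp t)
      _ ≤ Mfun T v t := IH t ht
      _ ≤ fmax (T.children s) (Mfun T v) := le_fmax _ ht

lemma fp_tight (hfp : IsTreeFixedPoint T v x w) (hv : ∀ l, T.IsLeaf l → 0 < v l) :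
    ∀ t, (1 - x t) * w t = 0 → Mfun T v t = w t ∧ x t * w t = w t := by
  apply T.height_induction
  intro s IH hu
  have hws := fp_w_pos hfp hv s
  have hxs : x s = 1 := by
    rcases mul_eq_zero.1 hu with h | h
    · linarith
    · linarith
  refine ⟨?_, by rw [hxs, one_mul]⟩
  by_cases hs : T.IsLeaf s
  · rw [hfp.1.1 s hs, Mfun_leaf v hs]
  · rw [hfp.1.2 s hs, Mfun_internal v hs]
    apply fmax_congr
    intro c hc
    obtain ⟨hcne, hcp⟩ := T.mem_children.1 hc
    have heq := hfp.2.2.2 c hcne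
    rw [hcp, hxs] at heq
    simp only [sub_self, zero_mul] at heq
    obtain ⟨h1, h2⟩ := IH c hc heq
    rw [h1, h2]

lemma fp_sep (hfp : IsTreeFixedPoint T v x w) (hv : ∀ l, T.IsLeaf l → 0 < v l)
    {t : T.V} (h : t ≠ T.root) (hM : Mfun T v t ≠ x t * w t) :
    wexcl T x w (T.parent t) t < x t * w t ∧ w (T.parent t) = x t * w t := by
  have hu : 0 < (1 - x t) * w t := by
    rcases lt_or_eq_of_le (fp_u_nonneg hfp hv t) with h' | h'
    · exact h'
    · obtain ⟨h1, h2⟩ := fp_tight hfp hv t h'.symm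
      exact absurd (h1.trans h2.symm) hM
  have heq := hfp.2.2.2 t h
  have hlt : wexcl T x w (T.parent t) t < x t * w t := by
    by_contra hle
    push_neg at hle
    rw [max_eq_left hle, sub_self, mul_zero] at heq
    linarith
  exact ⟨hlt, by rw [fp_w_parent hfp h, max_eq_right hlt.le]⟩

lemma fp_dagger (hfp : IsTreeFixedPoint T v x w) (hv : ∀ l, T.IsLeaf l → 0 < v l)
    (s : T.V) :
    ∑ t ∈ T.children s, (Mfun T v t - x t * w t) = Mfun T v s - w s := by
  by_cases hs : T.IsLeaf s
  · rw [hs, Finset.sum_empty, Mfun_leaf v hs, hfp.1.1 s hs, sub_self]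
  · by_cases hall : ∀ t ∈ T.children s, Mfun T v t = x t * w t
    · rw [Finset.sum_eq_zero fun t ht => by rw [hall t ht, sub_self]]
      rw [Mfun_internal v hs, hfp.1.2 s hs, fmax_congr hall, sub_self]
    · push_neg at hall
      obtain ⟨t0, ht0, hM0⟩ := hall
      obtain ⟨ht0ne, ht0p⟩ := T.mem_children.1 ht0
      obtain ⟨hlt0, hws0⟩ := fp_sep hfp hv ht0ne hM0
      rw [ht0p] at hlt0 hws0
      have herase : ∀ t ∈ (T.children s).erase t0, Mfun T v t = x t * w t := by
        intro t ht
        by_contra hMt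
        obtain ⟨htne, -⟩ := T.mem_children.1 (Finset.mem_erase.1 ht).2
        obtain ⟨hlt, -⟩ := fp_sep hfp hv htne hMt
        rw [(T.mem_children.1 (Finset.mem_erase.1 ht).2).2] at hlt
        have h1 : x t * w t ≤ wexcl T x w s t0 := by
          rw [wexcl]
          exact le_fmax (fun t' => x t' * w t')
            (Finset.mem_erase.2 ⟨(Finset.mem_erase.1 ht).1, (Finset.mem_erase.1 ht).2⟩)
        have h2 : x t0 * w t0 ≤ wexcl T x w s t := by
          rw [wexcl]
          exact le_fmax (fun t' => x t' * w t')
            (Finset.mem_erase.2 ⟨fun hh => (Finset.mem_erase.1 ht).1 hh.symm, ht0⟩)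
        linarith
      have hsum : ∑ t ∈ T.children s, (Mfun T v t - x t * w t) =
          Mfun T v t0 - x t0 * w t0 := by
        apply Finset.sum_eq_single_of_mem t0 ht0
        intro t ht htne
        rw [herase t (Finset.mem_erase.2 ⟨htne, ht⟩), sub_self]
      rw [hsum]
      have hws : w s = x t0 * w t0 := hws0
      have hMs : Mfun T v s = Mfun T v t0 := by
        rw [Mfun_internal v hs, fmax_erase (Mfun T v) ht0]
        have h1 : fmax ((T.children s).erase t0) (Mfun T v) = wexcl T x w s t0 := by
          rw [wexcl]
          exact fmax_congr herase
        rw [h1, max_eq_left]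
        calc wexcl T x w s t0 ≤ x t0 * w t0 := hlt0.le
          _ ≤ w t0 := mul_le_of_le_one_left (fp_w_pos hfp hv t0).le (fp_x_le_one hfp t0)
          _ ≤ Mfun T v t0 := fp_w_le_M hfp hv t0
      rw [hws, hMs]

end FixedPointLemmas



lemma sum_children_eq (T : BTree) (g : T.V → ℝ) :
    ∑ s, ∑ t ∈ T.children s, g t = ∑ t ∈ Finset.univ.filter (· ≠ T.root), g t := by
  rw [← Finset.sum_fiberwise_of_maps_to (fun a _ => Finset.mem_univ (T.parent a)) g]
  apply Finset.sum_congr rfl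
  intro s _
  apply Finset.sum_congr _ fun _ _ => rfl
  ext t
  simp only [BTree.children, Finset.mem_filter, Finset.mem_univ, true_and, and_assoc]

lemma fp_total {T : BTree} {v x w : T.V → ℝ} (hfp : IsTreeFixedPoint T v x w)
    (hv : ∀ l, T.IsLeaf l → 0 < v l) :
    ∑ t, (1 - x t) * w t = Mfun T v T.root := by
  have h1 : ∑ s, (Mfun T v s - w s) =
      ∑ t ∈ Finset.univ.filter (· ≠ T.root), (Mfun T v t - x t * w t) := by
    rw [← sum_children_eq]
    exact Finset.sum_congr rfl fun s _ => (fp_dagger hfp hv s).symm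
  rw [Finset.filter_ne', Finset.sum_erase_eq_sub (Finset.mem_univ T.root), hfp.2.1,
    zero_mul, sub_zero] at h1
  have e1 : ∑ s, (Mfun T v s - w s) = ∑ s, Mfun T v s - ∑ s, w s :=
    Finset.sum_sub_distrib _ _
  have e2 : ∑ t, (Mfun T v t - x t * w t) = ∑ t, Mfun T v t - ∑ t, x t * w t :=
    Finset.sum_sub_distrib _ _
  have e3 : ∑ t, (1 - x t) * w t = ∑ t, w t - ∑ t, x t * w t := by
    rw [← Finset.sum_sub_distrib]
    exact Finset.sum_congr rfl fun t _ => by ring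
  linarith

lemma M_le_vstar {T : BTree} {v : T.V → ℝ} {vstar : ℝ}
    (hmax : ∀ l, T.IsLeaf l → v l ≤ vstar) (h0 : 0 ≤ vstar) :
    ∀ t, Mfun T v t ≤ vstar := by
  apply T.height_induction
  intro s IH
  by_cases hs : T.IsLeaf s
  · rw [Mfun_leaf v hs]; exact hmax s hs
  · rw [Mfun_internal v hs]
    exact fmax_le h0 IH

lemma vstar_le_M_root {T : BTree} {v : T.V → ℝ} {l : T.V} (hl : T.IsLeaf l) :
    v l ≤ Mfun T v T.root := by
  have key : ∀ k, v l ≤ Mfun T v (T.parent^[k] l) := by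
    intro k
    induction k with
    | zero => rw [Function.iterate_zero_apply, Mfun_leaf v hl]
    | succ n ih =>
      rw [Function.iterate_succ_apply']
      set a := T.parent^[n] l with ha
      rcases eq_or_ne a T.root with h | h
      · rw [h, T.parent_root]; rwa [h] at ih
      · have hc : a ∈ T.children (T.parent a) := T.mem_children_parent h
        have hs : ¬ T.IsLeaf (T.parent a) := T.not_isLeaf_of_mem_children hc
        rw [Mfun_internal v hs]
        exact le_trans ih (le_fmax (Mfun T v) hc)
  have := key (T.depth l)
  rwa [T.depth_spec l] at this

lemma fp_path {T : BTree} {v x w : T.V → ℝ} (hfp : IsTreeFixedPoint T v x w)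
    (hv : ∀ l, T.IsLeaf l → 0 < v l) :
    ∀ t, ∀ S : Finset T.V, (∀ k, T.parent^[k] t ∈ S) →
      w t ≤ ∑ a ∈ S, (1 - x a) * w a := by
  apply T.depth_strong_induction
    (P := fun t => ∀ S : Finset T.V, (∀ k, T.parent^[k] t ∈ S) →
      w t ≤ ∑ a ∈ S, (1 - x a) * w a)
  · intro S hS
    have hr : T.root ∈ S := hS 0
    calc w T.root = (1 - x T.root) * w T.root := by rw [hfp.2.1]; ring
      _ ≤ ∑ a ∈ S, (1 - x a) * w a :=
        Finset.single_le_sum (fun a _ => fp_u_nonneg hfp hv a) hr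
  · intro t htne IH S hS
    have htS : t ∈ S := hS 0
    have hS' : ∀ k, T.parent^[k] (T.parent t) ∈ S.erase t := by
      intro k
      rw [← Function.iterate_succ_apply]
      refine Finset.mem_erase.2 ⟨fun hh => htne (T.eq_root_of_iterate (by omega) hh), hS (k + 1)⟩
    have h1 := IH (S.erase t) hS'
    have h2 : x t * w t ≤ w (T.parent t) := by
      rw [fp_w_parent hfp htne]; exact le_max_right _ _
    have h3 : (1 - x t) * w t + ∑ a ∈ S.erase t, (1 - x a) * w a = ∑ a ∈ S, (1 - x a) * w a :=
      Finset.add_sum_erase S (fun a => (1 - x a) * w a) htS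
    nlinarith [h1, h2, h3]


/-- The value `V(S)` of a coalition `S` of nodes: the maximum value of a leaf
whose entire path to the root lies in `S` (and `0` if there is no such leaf). -/
noncomputable def coalV (T : BTree) (v : T.V → ℝ) (S : Finset T.V) : ℝ :=
  sSup (insert 0
    {c : ℝ | ∃ l, T.IsLeaf l ∧ (∀ k : ℕ, T.parent^[k] l ∈ S) ∧ c = v l})

/-- Core membership of the fixed-point payoffs `u t = (1 − x t)·w t`: the total
payoff equals the grand coalition value `V(T) = v*`, and every coalition `S`
receives at least `V(S)`. -/
theorem tree_fixed_point_in_core (T : BTree) (v x w : T.V → ℝ)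
    (hv : ∀ l, T.IsLeaf l → 0 < v l) (hroot : ¬ T.IsLeaf T.root)
    (hfp : IsTreeFixedPoint T v x w)
    (vstar : ℝ) (hmax : ∀ l, T.IsLeaf l → v l ≤ vstar)
    (hex : ∃ l, T.IsLeaf l ∧ v l = vstar) :
    (∑ t, (1 - x t) * w t = vstar) ∧
    coalV T v Finset.univ = vstar ∧
    (∀ S : Finset T.V, coalV T v S ≤ ∑ t ∈ S, (1 - x t) * w t) := by
  obtain ⟨l0, hl0, hvl0⟩ := hex
  have hv0 : 0 < vstar := hvl0 ▸ hv l0 hl0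
  have hMroot : Mfun T v T.root = vstar :=
    le_antisymm (M_le_vstar hmax hv0.le T.root) (hvl0 ▸ vstar_le_M_root hl0)
  refine ⟨by rw [fp_total hfp hv, hMroot], ?_, ?_⟩
  · apply le_antisymm
    · apply csSup_le ⟨0, Set.mem_insert _ _⟩
      rintro b (rfl | ⟨l, hl, -, rfl⟩)
      · exact hv0.le
      · exact hmax l hl
    · apply le_csSup
      · refine ⟨vstar, ?_⟩
        rintro b (rfl | ⟨l, hl, -, rfl⟩)
        · exact hv0.le
        · exact hmax l hl
      · exact Set.mem_insert_iff.2 (Or.inr ⟨l0, hl0, fun k => Finset.mem_univ _, hvl0.symm⟩)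
  · intro S
    apply csSup_le ⟨0, Set.mem_insert _ _⟩
    rintro b (rfl | ⟨l, hl, hpath, rfl⟩)
    · exact Finset.sum_nonneg fun a _ => fp_u_nonneg hfp hv a
    · rw [← hfp.1.1 l hl]
      exact fp_path hfp hv l S hpath
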